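/- arXiv:0807.4685 — 2 statements merged into one kernel-verified Lean document; each statement's English description precedes it below -/
import Mathlib

section
/- For every endomorphism X of a finite-dimensional real vector space V there exist unique commuting endomorphisms E, H, N of V with X = E + H + N, where E is semisimple with purely imaginary eigenvalues, H is semisimple with real eigenvalues, and N is nilpotent. -/
open TensorProduct Polynomial Module
set_option linter.unusedSectionVars false

/-- An endomorphism of a vector space over `K` is diagonalizable if its eigenspaces span. -/
def IsDiag {K M : Type*} [Field K] [AddCommGroup M] [Module K M]
    (f : Module.End K M) : Prop :=
  (⨆ μ : K, f.eigenspace μ) = ⊤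

/-- The complexification of a real endomorphism, acting on `ℂ ⊗[ℝ] V`. -/
noncomputable def cplx {V : Type*} [AddCommGroup V] [Module ℝ V]
    (X : Module.End ℝ V) : Module.End ℂ (ℂ ⊗[ℝ] V) :=
  LinearMap.baseChange ℂ X

/-- `X` is (additively) elliptic: semisimple with purely imaginary eigenvalues. -/
noncomputable def IsElliptic {V : Type*} [AddCommGroup V] [Module ℝ V]
    (X : Module.End ℝ V) : Prop :=
  IsDiag (cplx X) ∧ ∀ μ : ℂ, (cplx X).HasEigenvalue μ → μ.re = 0

/-- `X` is (additively) hyperbolic: semisimple with real eigenvalues. -/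
noncomputable def IsHyperbolic {V : Type*} [AddCommGroup V] [Module ℝ V]
    (X : Module.End ℝ V) : Prop :=
  IsDiag (cplx X) ∧ ∀ μ : ℂ, (cplx X).HasEigenvalue μ → μ.im = 0

/-- `g` is (multiplicatively) elliptic: semisimple with eigenvalues of absolute value one. -/
noncomputable def IsMultElliptic {V : Type*} [AddCommGroup V] [Module ℝ V]
    (g : Module.End ℝ V) : Prop :=
  IsDiag (cplx g) ∧ ∀ μ : ℂ, (cplx g).HasEigenvalue μ → ‖μ‖ = 1

/-- `g` is (multiplicatively) hyperbolic: semisimple with positive real eigenvalues. -/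
noncomputable def IsMultHyperbolic {V : Type*} [AddCommGroup V] [Module ℝ V]
    (g : Module.End ℝ V) : Prop :=
  IsDiag (cplx g) ∧ ∀ μ : ℂ, (cplx g).HasEigenvalue μ → μ.im = 0 ∧ 0 < μ.re


section Helpers

variable {W : Type*} [AddCommGroup W] [Module ℂ W]

/-- Action of a polynomial of `f` on an eigenvector. -/
lemma aeval_apply_mem_eigenspace {f : Module.End ℂ W} {μ : ℂ} {x : W}
    (hx : x ∈ f.eigenspace μ) (p : ℂ[X]) : (aeval f p) x = p.eval μ • x := by
  rcases eq_or_ne x 0 with rfl | hne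
  · simp
  · exact Module.End.aeval_apply_of_hasEigenvector ⟨hx, hne⟩

/-- If eigenspaces with eigenvalues in `T` span, then `h` is diagonalizable with
eigenvalues in `T`. -/
lemma isDiag_and_eigenvalues_of_biSup (h : Module.End ℂ W) (T : Set ℂ)
    (hT : ⨆ ν ∈ T, h.eigenspace ν = ⊤) :
    IsDiag h ∧ ∀ ν : ℂ, h.HasEigenvalue ν → ν ∈ T := by
  constructor
  · rw [IsDiag, eq_top_iff, ← hT]
    exact iSup₂_le fun ν _ => le_iSup (fun μ => h.eigenspace μ) ν
  · intro ν hν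
    by_contra hmem
    have hd := (Module.End.eigenspaces_iSupIndep h).disjoint_biSup hmem
    rw [hT, disjoint_top] at hd
    exact Module.End.hasEigenvalue_iff.mp hν hd

/-- A diagonalizable endomorphism whose only eigenvalue is zero is zero. -/
lemma eq_zero_of_isDiag_of_eigenvalues_zero {h : Module.End ℂ W} (hd : IsDiag h)
    (h0 : ∀ ν : ℂ, h.HasEigenvalue ν → ν = 0) : h = 0 := by
  have hle : ∀ ν : ℂ, h.eigenspace ν ≤ h.eigenspace 0 := by
    intro ν
    rcases eq_or_ne ν 0 with rfl | hne
    · exact le_rfl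
    · rcases eq_or_ne (h.eigenspace ν) ⊥ with hb | hb
      · simp [hb]
      · exact absurd (h0 ν (Module.End.hasEigenvalue_iff.mpr hb)) hne
  have : (⊤ : Submodule ℂ W) ≤ h.eigenspace 0 := by
    rw [← hd]; exact iSup_le hle
  ext x
  have hx := this (Submodule.mem_top (x := x))
  rw [Module.End.mem_eigenspace_iff] at hx
  simpa using hx

lemma eigenvalue_zero_of_isNilpotent {h : Module.End ℂ W} (hn : IsNilpotent h)
    {ν : ℂ} (hν : h.HasEigenvalue ν) : ν = 0 := by
  obtain ⟨x, hx⟩ := hν.exists_hasEigenvector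
  obtain ⟨k, hk⟩ := hn
  have := hx.pow_apply k
  rw [hk] at this
  have : ν ^ k • x = 0 := by simpa using this.symm
  rcases smul_eq_zero.mp this with hz | hz
  · exact pow_eq_zero_iff' .. |>.mp hz |>.1
  · exact absurd hz hx.2

variable [FiniteDimensional ℂ W]

/-- A diagonalizable endomorphism over `ℂ` is semisimple. -/
lemma isSemisimple_of_isDiag {f : Module.End ℂ W} (hf : IsDiag f) : f.IsSemisimple := by
  classical
  set s : Finset ℂ := (minpoly ℂ f).roots.toFinset with hs
  set p : ℂ[X] := ∏ μ ∈ s, (X - C μ) with hp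
  have hsep : p.Separable := by
    rw [hp, ← Finset.prod_attach]
    exact Polynomial.separable_prod_X_sub_C_iff'.mpr (fun i _ j _ h => Subtype.ext h)
  refine Module.End.isSemisimple_of_squarefree_aeval_eq_zero hsep.squarefree ?_
  ext x
  have hx : x ∈ (⊤ : Submodule ℂ W) := Submodule.mem_top
  rw [← hf] at hx
  simp only [LinearMap.zero_apply]
  induction hx using Submodule.iSup_induction' with
  | mem μ y hy =>
      rw [aeval_apply_mem_eigenspace hy]
      rcases eq_or_ne y 0 with rfl | hne
      · simp
      · have hev : f.HasEigenvalue μ := Module.End.hasEigenvalue_of_hasEigenvector ⟨hy, hne⟩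
        have hroot : (minpoly ℂ f).IsRoot μ := Module.End.hasEigenvalue_iff_isRoot.mp hev
        have hμs : μ ∈ s := by
          rw [hs, Multiset.mem_toFinset, mem_roots (minpoly.ne_zero_of_finite ℂ f)]
          exact hroot
        have : p.eval μ = 0 := by
          rw [hp, eval_prod]
          exact Finset.prod_eq_zero hμs (by simp)
        simp [this]
  | zero => simp
  | add y z _ _ hy hz => rw [map_add, hy, hz, add_zero]

/-- Key combination lemma: if `g` acts on joint eigenspaces of a commuting diagonalizable
family by scalars in `T`, then `g` is diagonalizable with eigenvalues in `T`. -/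
lemma comb_lemma {n : ℕ} (f : Fin n → Module.End ℂ W)
    (hcomm : ∀ i j, Commute (f i) (f j)) (hdiag : ∀ i, IsDiag (f i))
    (g : Module.End ℂ W) (c : (Fin n → ℂ) → ℂ)
    (hg : ∀ χ : Fin n → ℂ, (⨅ i, (f i).eigenspace (χ i)) ≤ g.eigenspace (c χ))
    (T : Set ℂ) (hT : ∀ χ : Fin n → ℂ, (∀ i, (f i).HasEigenvalue (χ i)) → c χ ∈ T) :
    IsDiag g ∧ ∀ ν : ℂ, g.HasEigenvalue ν → ν ∈ T := by
  have heig : ∀ i μ, (f i).maxGenEigenspace μ = (f i).eigenspace μ := fun i μ =>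
    ((isSemisimple_of_isDiag (hdiag i)).isFinitelySemisimple).maxGenEigenspace_eq_eigenspace μ
  have htop : ⨆ χ : Fin n → ℂ, ⨅ i, (f i).eigenspace (χ i) = ⊤ := by
    have := Module.End.iSup_iInf_maxGenEigenspace_eq_top_of_iSup_maxGenEigenspace_eq_top_of_commute
      f (fun i j _ => hcomm i j) (fun i => by
        rw [eq_top_iff, ← hdiag i]
        exact iSup_le fun μ => le_iSup_of_le μ (le_of_eq (heig i μ).symm))
    simpa only [heig] using this
  refine isDiag_and_eigenvalues_of_biSup g T ?_
  rw [eq_top_iff, ← htop]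
  refine iSup_le fun χ => ?_
  rcases eq_or_ne (⨅ i, (f i).eigenspace (χ i)) ⊥ with hb | hb
  · rw [hb]; exact bot_le
  · have hev : ∀ i, (f i).HasEigenvalue (χ i) := by
      intro i
      refine Module.End.hasEigenvalue_iff.mpr (fun hbot => hb ?_)
      rw [eq_bot_iff, ← hbot]
      exact iInf_le _ i
    calc (⨅ i, (f i).eigenspace (χ i)) ≤ g.eigenspace (c χ) := hg χ
    _ ≤ ⨆ ν ∈ T, g.eigenspace ν := le_biSup _ (hT χ hev)

end Helpers
section Bridge

variable {V : Type*} [AddCommGroup V] [Module ℝ V] [FiniteDimensional ℝ V]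

lemma cplx_apply_tmul (f : Module.End ℝ V) (z : ℂ) (v : V) :
    cplx f (z ⊗ₜ v) = z ⊗ₜ (f v) := rfl

lemma cplx_eq_baseChangeHom (f : Module.End ℝ V) :
    cplx f = Module.End.baseChangeHom ℝ ℂ V f := rfl

lemma cplx_injective : Function.Injective (cplx (V := V)) := by
  intro f g h
  ext v
  have h1 : cplx f ((1 : ℂ) ⊗ₜ v) = cplx g ((1 : ℂ) ⊗ₜ v) := by rw [h]
  rw [cplx_apply_tmul, cplx_apply_tmul] at h1
  let π : ℂ ⊗[ℝ] V →ₗ[ℝ] V :=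
    (TensorProduct.lid ℝ V).toLinearMap ∘ₗ (TensorProduct.map Complex.reLm LinearMap.id)
  have hπ : ∀ w : V, π ((1 : ℂ) ⊗ₜ w) = w := by
    intro w
    simp [π, TensorProduct.lid_tmul]
  have := congrArg π h1
  rwa [hπ, hπ] at this

lemma cplx_aeval (f : Module.End ℝ V) (p : Polynomial ℝ) :
    cplx (aeval f p) = aeval (cplx f) (p.map (algebraMap ℝ ℂ)) := by
  rw [aeval_map_algebraMap, cplx_eq_baseChangeHom, cplx_eq_baseChangeHom]
  exact (aeval_algHom_apply (Module.End.baseChangeHom ℝ ℂ V) f p).symm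

lemma cplx_sub (f g : Module.End ℝ V) : cplx (f - g) = cplx f - cplx g := by
  rw [cplx_eq_baseChangeHom, cplx_eq_baseChangeHom, cplx_eq_baseChangeHom, map_sub]

lemma cplx_commute {f g : Module.End ℝ V} (h : Commute f g) :
    Commute (cplx f) (cplx g) := by
  rw [cplx_eq_baseChangeHom, cplx_eq_baseChangeHom]
  exact h.map (Module.End.baseChangeHom ℝ ℂ V)

lemma cplx_nilpotent {f : Module.End ℝ V} (h : IsNilpotent f) : IsNilpotent (cplx f) := by
  rw [cplx_eq_baseChangeHom]
  exact h.map (Module.End.baseChangeHom ℝ ℂ V)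

/-- The minimal polynomial of `f`, base changed, annihilates `cplx f`. -/
lemma aeval_cplx_minpoly (f : Module.End ℝ V) :
    aeval (cplx f) ((minpoly ℝ f).map (algebraMap ℝ ℂ)) = 0 := by
  rw [← cplx_aeval, minpoly.aeval]
  exact map_zero (Module.End.baseChangeHom ℝ ℂ V)

/-- Eigenvalues of `cplx f` are roots of the (mapped) real minimal polynomial. -/
lemma isRoot_of_hasEigenvalue_cplx {f : Module.End ℝ V} {μ : ℂ}
    (h : (cplx f).HasEigenvalue μ) : ((minpoly ℝ f).map (algebraMap ℝ ℂ)).IsRoot μ := by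
  have h1 : (minpoly ℂ (cplx f)).IsRoot μ := Module.End.hasEigenvalue_iff_isRoot.mp h
  exact h1.dvd (minpoly.dvd ℂ (cplx f) (aeval_cplx_minpoly f))

/-- The complexification of a real semisimple endomorphism is diagonalizable. -/
lemma isDiag_cplx_of_isSemisimple {f : Module.End ℝ V} (hf : f.IsSemisimple) :
    IsDiag (cplx f) := by
  have hsq : Squarefree (minpoly ℝ f) := hf.minpoly_squarefree
  have hsep : (minpoly ℝ f).Separable := (PerfectField.separable_iff_squarefree).mpr hsq
  have hsep2 : ((minpoly ℝ f).map (algebraMap ℝ ℂ)).Separable := hsep.map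
  have hss : (cplx f).IsSemisimple :=
    Module.End.isSemisimple_of_squarefree_aeval_eq_zero hsep2.squarefree (aeval_cplx_minpoly f)
  have heig := (hss.isFinitelySemisimple).maxGenEigenspace_eq_eigenspace
  have := Module.End.iSup_maxGenEigenspace_eq_top (cplx f)
  rw [IsDiag, eq_top_iff, ← this]
  exact iSup_le fun μ => le_iSup_of_le μ (le_of_eq (heig μ))

end Bridge
section Split

variable {V : Type*} [AddCommGroup V] [Module ℝ V] [FiniteDimensional ℝ V]

open ComplexConjugate

lemma commute_of_commute_of_mem_adjoin {c X y : Module.End ℝ V} (h : Commute c X)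
    (hy : y ∈ Algebra.adjoin ℝ {X}) : Commute c y := by
  rw [Algebra.adjoin_singleton_eq_range_aeval] at hy
  obtain ⟨p, rfl⟩ := hy
  induction p using Polynomial.induction_on' with
  | add p q hp hq => rw [map_add]; exact hp.add_right hq
  | monomial n a =>
      show Commute c (aeval X ((monomial n) a))
      rw [aeval_monomial]
      exact (Algebra.commute_algebraMap_right a c).mul_right (h.pow_right n)

/-- Splitting a real semisimple endomorphism into hyperbolic and elliptic parts. -/
lemma exists_split (S : Module.End ℝ V) (hS : S.IsSemisimple) :
    ∃ H ∈ Algebra.adjoin ℝ {S}, IsHyperbolic H ∧ IsElliptic (S - H) := by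
  classical
  set P : Polynomial ℂ := (minpoly ℝ S).map (algebraMap ℝ ℂ) with hP
  have hP0 : P ≠ 0 := by
    rw [hP, Ne, Polynomial.map_eq_zero]
    exact minpoly.ne_zero_of_finite ℝ S
  set s : Finset ℂ := P.roots.toFinset with hs
  have hconjmem : ∀ μ ∈ s, conj μ ∈ s := by
    intro μ hμ
    rw [hs, Multiset.mem_toFinset, mem_roots hP0] at hμ ⊢
    have : aeval (conj μ) (minpoly ℝ S) = conj (aeval μ (minpoly ℝ S)) :=
      Polynomial.aeval_conj (K := ℂ) _ μ
    rw [IsRoot, ← Polynomial.coe_aeval_eq_eval] at hμ ⊢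
    rw [hP] at hμ ⊢
    rw [aeval_map_algebraMap] at hμ ⊢
    rw [this, hμ, map_zero]
  set r : ℂ → ℂ := fun μ => ((μ.re : ℝ) : ℂ) with hr
  set q : Polynomial ℂ := Lagrange.interpolate s id r with hq
  have hnode : ∀ μ ∈ s, q.eval μ = r μ := fun μ hμ =>
    Lagrange.eval_interpolate_at_node r (Set.injOn_id _) hμ
  have hqconj : q.map (starRingEnd ℂ) = q := by
    refine (Lagrange.eq_interpolate_of_eval_eq r (Set.injOn_id _) ?_ ?_).symm.symm
    · rw [Polynomial.degree_map]
      exact Lagrange.degree_interpolate_lt r (Set.injOn_id _)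
    · intro i hi
      have hj : conj i ∈ s := hconjmem i hi
      have h1 : (id i : ℂ) = conj (conj i) := by simp
      rw [id_eq] at h1 ⊢
      rw [h1, Polynomial.eval_map, Polynomial.eval₂_hom, hnode _ hj]
      simp [hr]
  have hlift : q ∈ Polynomial.lifts (algebraMap ℝ ℂ) := by
    rw [Polynomial.lifts_iff_coeff_lifts]
    intro n
    have h1 : conj (q.coeff n) = q.coeff n := by
      conv_rhs => rw [← hqconj]
      rw [Polynomial.coeff_map]
    refine ⟨(q.coeff n).re, ?_⟩
    rw [Complex.coe_algebraMap]
    exact Complex.conj_eq_iff_re.mp h1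
  obtain ⟨pH, hpH⟩ := (Polynomial.mem_lifts _).mp hlift
  refine ⟨aeval S pH, ?_, ?_, ?_⟩
  · rw [Algebra.adjoin_singleton_eq_range_aeval]
    exact ⟨pH, rfl⟩
  all_goals {
    have hcplxH : cplx (aeval S pH) = aeval (cplx S) q := by rw [cplx_aeval, hpH]
    have hdiagS : IsDiag (cplx S) := isDiag_cplx_of_isSemisimple hS
    have hevmem : ∀ μ : ℂ, (cplx S).HasEigenvalue μ → μ ∈ s := by
      intro μ hμ
      rw [hs, Multiset.mem_toFinset, mem_roots hP0]
      exact isRoot_of_hasEigenvalue_cplx hμ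
    first
    | -- IsHyperbolic
      exact comb_lemma (fun _ : Fin 1 => cplx S) (fun _ _ => Commute.refl _)
        (fun _ => hdiagS) (cplx (aeval S pH)) (fun χ => q.eval (χ 0))
        (fun χ => by
          intro x hx
          have hx0 : x ∈ (cplx S).eigenspace (χ 0) := (Submodule.mem_iInf _).mp hx 0
          rw [Module.End.mem_eigenspace_iff, hcplxH]
          exact aeval_apply_mem_eigenspace hx0 q)
        {ν : ℂ | ν.im = 0}
        (fun χ hχ => by
          have h2 := hnode (χ 0) (hevmem _ (hχ 0))
          show (q.eval (χ 0)).im = 0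
          rw [h2, hr]
          simp)
    | -- IsElliptic
      exact comb_lemma (fun _ : Fin 1 => cplx S) (fun _ _ => Commute.refl _)
        (fun _ => hdiagS) (cplx (S - aeval S pH)) (fun χ => χ 0 - q.eval (χ 0))
        (fun χ => by
          intro x hx
          have hx0 : x ∈ (cplx S).eigenspace (χ 0) := (Submodule.mem_iInf _).mp hx 0
          rw [Module.End.mem_eigenspace_iff, cplx_sub, LinearMap.sub_apply, hcplxH,
            aeval_apply_mem_eigenspace hx0 q, Module.End.mem_eigenspace_iff.mp hx0, sub_smul])
        {ν : ℂ | ν.re = 0}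
        (fun χ hχ => by
          have h2 := hnode (χ 0) (hevmem _ (hχ 0))
          show (χ 0 - q.eval (χ 0)).re = 0
          rw [h2, hr]
          simp) }

end Split
section Comb2

variable {W : Type*} [AddCommGroup W] [Module ℂ W] [FiniteDimensional ℂ W]

lemma comb2 (a b g : Module.End ℂ W) (hab : Commute a b) (ha : IsDiag a) (hb : IsDiag b)
    (c : ℂ → ℂ → ℂ)
    (hg : ∀ (μ ν : ℂ) (x : W), x ∈ a.eigenspace μ → x ∈ b.eigenspace ν → g x = c μ ν • x)
    (T : Set ℂ) (hT : ∀ μ ν : ℂ, a.HasEigenvalue μ → b.HasEigenvalue ν → c μ ν ∈ T) :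
    IsDiag g ∧ ∀ ν : ℂ, g.HasEigenvalue ν → ν ∈ T := by
  refine comb_lemma ![a, b] ?_ ?_ g (fun χ => c (χ 0) (χ 1)) ?_ T ?_
  · intro i j
    fin_cases i <;> fin_cases j <;>
      simp only [Matrix.cons_val_zero, Matrix.cons_val_one, Matrix.head_cons] <;>
      first | exact Commute.refl _ | exact hab | exact hab.symm
  · intro i
    fin_cases i <;>
      simp only [Matrix.cons_val_zero, Matrix.cons_val_one, Matrix.head_cons] <;>
      first | exact ha | exact hb
  · intro χ x hx
    rw [Submodule.mem_iInf] at hx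
    have h0 := hx 0
    have h1 := hx 1
    simp only [Matrix.cons_val_zero, Matrix.cons_val_one, Matrix.head_cons] at h0 h1
    exact Module.End.mem_eigenspace_iff.mpr (hg _ _ _ h0 h1)
  · intro χ hχ
    have h0 := hχ 0
    have h1 := hχ 1
    simp only [Matrix.cons_val_zero, Matrix.cons_val_one, Matrix.head_cons] at h0 h1
    exact hT _ _ h0 h1

end Comb2

section MainAux

variable {V : Type*} [AddCommGroup V] [Module ℝ V] [FiniteDimensional ℝ V]

lemma cplx_add (f g : Module.End ℝ V) : cplx (f + g) = cplx f + cplx g := by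
  rw [cplx_eq_baseChangeHom, cplx_eq_baseChangeHom, cplx_eq_baseChangeHom, map_add]

end MainAux
theorem additive_jordan_decomposition
    {V : Type*} [AddCommGroup V] [Module ℝ V] [FiniteDimensional ℝ V]
    (X : Module.End ℝ V) :
    ∃! d : Module.End ℝ V × Module.End ℝ V × Module.End ℝ V,
      Commute d.1 d.2.1 ∧ Commute d.1 d.2.2 ∧ Commute d.2.1 d.2.2 ∧
      IsElliptic d.1 ∧ IsHyperbolic d.2.1 ∧ IsNilpotent d.2.2 ∧
      X = d.1 + d.2.1 + d.2.2 := by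
  classical
  obtain ⟨N, hNmem, S, hSmem, hNnil, hSss, hXeq⟩ :=
    Module.End.exists_isNilpotent_isSemisimple (K := ℝ) (f := X)
  obtain ⟨H, hHmemS, hHhyp, hEell⟩ := exists_split S hSss
  set E : Module.End ℝ V := S - H with hEdef
  have hHmem : H ∈ Algebra.adjoin ℝ {X} := by
    have hsub : Algebra.adjoin ℝ {S} ≤ Algebra.adjoin ℝ {X} :=
      Algebra.adjoin_le (by simpa using hSmem)
    exact hsub hHmemS
  have hEmem : E ∈ Algebra.adjoin ℝ {X} := sub_mem hSmem hHmem
  have hcomm_adj : ∀ a ∈ Algebra.adjoin ℝ {X}, ∀ b ∈ Algebra.adjoin ℝ {X}, Commute a b := by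
    intro a ha b hb
    rw [Algebra.adjoin_singleton_eq_range_aeval] at ha hb
    obtain ⟨p, rfl⟩ := ha
    obtain ⟨p', rfl⟩ := hb
    exact (Commute.all p p').map (aeval X)
  have hXsum : X = E + H + N := by
    rw [hEdef, sub_add_cancel, hXeq, add_comm]
  refine ⟨(E, H, N), ⟨hcomm_adj E hEmem H hHmem, hcomm_adj E hEmem N hNmem,
    hcomm_adj H hHmem N hNmem, hEell, hHhyp, hNnil, hXsum⟩, ?_⟩
  rintro ⟨E', H', N'⟩ ⟨c12, c13, c23, hE', hH', hN', hXd⟩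
  simp only at c12 c13 c23 hE' hH' hN' hXd
  -- everything commutes with X, hence with E, H, N, S
  have hE'X : Commute E' X := by
    rw [hXd]; exact ((Commute.refl E').add_right c12).add_right c13
  have hH'X : Commute H' X := by
    rw [hXd]; exact (c12.symm.add_right (Commute.refl H')).add_right c23
  have hN'X : Commute N' X := by
    rw [hXd]; exact (c13.symm.add_right c23.symm).add_right (Commute.refl N')
  set S' : Module.End ℝ V := E' + H' with hS'def
  have hS'X : Commute S' X := hE'X.add_left hH'X
  have hSdiag : IsDiag (cplx S) := isDiag_cplx_of_isSemisimple hSss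
  have hS'diag : IsDiag (cplx S') :=
    (comb2 (cplx E') (cplx H') (cplx S') (cplx_commute c12) hE'.1 hH'.1
      (fun μ ν => μ + ν)
      (fun μ ν x hμ hν => by
        rw [hS'def, cplx_add, LinearMap.add_apply, Module.End.mem_eigenspace_iff.mp hμ,
          Module.End.mem_eigenspace_iff.mp hν, add_smul])
      Set.univ (fun _ _ _ _ => Set.mem_univ _)).1
  have hSS' : Commute S S' := (commute_of_commute_of_mem_adjoin hS'X hSmem).symm
  have hdiffdiag : IsDiag (cplx (S - S')) :=
    (comb2 (cplx S) (cplx S') (cplx (S - S')) (cplx_commute hSS') hSdiag hS'diag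
      (fun μ ν => μ - ν)
      (fun μ ν x hμ hν => by
        rw [cplx_sub, LinearMap.sub_apply, Module.End.mem_eigenspace_iff.mp hμ,
          Module.End.mem_eigenspace_iff.mp hν, sub_smul])
      Set.univ (fun _ _ _ _ => Set.mem_univ _)).1
  have hczero : cplx (0 : Module.End ℝ V) = 0 := by
    rw [cplx_eq_baseChangeHom, map_zero]
  have hNN' : Commute N' N := commute_of_commute_of_mem_adjoin hN'X hNmem
  have hdiff_eq : S - S' = N' - N := by
    have h1 : E + H + N = S' + N' := by rw [← hXsum, hXd, hS'def]
    have h2 : E + H = S := by rw [hEdef, sub_add_cancel]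
    rw [h2] at h1
    calc S - S' = (S + N) - (S' + N) := by abel
    _ = (S' + N') - (S' + N) := by rw [h1]
    _ = N' - N := by abel
  have hdiffnil : IsNilpotent (S - S') := hdiff_eq ▸ hNN'.isNilpotent_sub hN' hNnil
  have hdiffzero : cplx (S - S') = 0 :=
    eq_zero_of_isDiag_of_eigenvalues_zero hdiffdiag
      (fun ν hν => eigenvalue_zero_of_isNilpotent (cplx_nilpotent hdiffnil) hν)
  have hSeq : S = S' := by
    exact sub_eq_zero.mp (cplx_injective (hdiffzero.trans hczero.symm))
  have hNeq : N' = N := by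
    have : N' - N = 0 := by rw [← hdiff_eq, hSeq, sub_self]
    exact sub_eq_zero.mp this
  -- Now H - H' = E' - E is both hyperbolic-type and elliptic-type, hence zero
  have hH'H : Commute H' H := commute_of_commute_of_mem_adjoin hH'X hHmem
  have hE'E : Commute E' E := commute_of_commute_of_mem_adjoin hE'X hEmem
  have hBeq : H - H' = E' - E := by
    have : E + H = E' + H' := by rw [hEdef, sub_add_cancel, hSeq, hS'def]
    calc H - H' = (E + H) - (E' + H') + (E' - E) := by abel
    _ = E' - E := by rw [this]; abel
  have hHside := comb2 (cplx H) (cplx H') (cplx (H - H')) (cplx_commute hH'H.symm)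
      hHhyp.1 hH'.1 (fun μ ν => μ - ν)
      (fun μ ν x hμ hν => by
        rw [cplx_sub, LinearMap.sub_apply, Module.End.mem_eigenspace_iff.mp hμ,
          Module.End.mem_eigenspace_iff.mp hν, sub_smul])
      {ν : ℂ | ν.im = 0}
      (fun μ ν hμ hν => by
        have h1 := hHhyp.2 μ hμ
        have h2 := hH'.2 ν hν
        show (μ - ν).im = 0
        rw [Complex.sub_im, h1, h2, sub_zero])
  have hEside := comb2 (cplx E') (cplx E) (cplx (E' - E)) (cplx_commute hE'E)
      hE'.1 hEell.1 (fun μ ν => μ - ν)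
      (fun μ ν x hμ hν => by
        rw [cplx_sub, LinearMap.sub_apply, Module.End.mem_eigenspace_iff.mp hμ,
          Module.End.mem_eigenspace_iff.mp hν, sub_smul])
      {ν : ℂ | ν.re = 0}
      (fun μ ν hμ hν => by
        have h1 := hE'.2 μ hμ
        have h2 := hEell.2 ν hν
        show (μ - ν).re = 0
        rw [Complex.sub_re, h1, h2, sub_zero])
  have hBzero : cplx (H - H') = 0 := by
    refine eq_zero_of_isDiag_of_eigenvalues_zero hHside.1 (fun ν hν => ?_)
    have him : ν.im = 0 := hHside.2 ν hν
    have hre : ν.re = 0 := by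
      have hν' : (cplx (E' - E)).HasEigenvalue ν := by rwa [← hBeq]
      exact hEside.2 ν hν'
    exact Complex.ext hre him
  have hHeq : H' = H := by
    exact (sub_eq_zero.mp (cplx_injective (hBzero.trans hczero.symm))).symm
  have hEeq : E' = E := by
    have h1 : E' - E = 0 := by rw [← hBeq, hHeq, sub_self]
    exact sub_eq_zero.mp h1
  exact Prod.ext hEeq (Prod.ext hHeq hNeq)
end

section
/- If E is an endomorphism of a finite-dimensional real vector space V that is semisimple with purely imaginary eigenvalues, then ad(E) : End(V) → End(V), Y ↦ EY − YE, is semisimple with purely imaginary eigenvalues. -/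
open TensorProduct

/-- The adjoint action `Y ↦ T * Y - Y * T` on endomorphisms. -/
noncomputable def adC {W : Type*} [AddCommGroup W] [Module ℂ W]
    (T : Module.End ℂ W) : Module.End ℂ (Module.End ℂ W) :=
  LinearMap.mulLeft ℂ T - LinearMap.mulRight ℂ T


section Key

variable {W : Type*} [AddCommGroup W] [Module ℂ W] [FiniteDimensional ℂ W]

set_option maxHeartbeats 1000000 in
set_option synthInstance.maxHeartbeats 200000 in
theorem adC_key (T : Module.End ℂ W) (hT : (⨆ μ : ℂ, T.eigenspace μ) = ⊤) :
    (⊤ : Submodule ℂ (Module.End ℂ W)) ≤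
      ⨆ (a : ℂ) (_ : T.HasEigenvalue a) (b : ℂ) (_ : T.HasEigenvalue b),
        (adC T).eigenspace (a - b) := by
  have hInt : DirectSum.IsInternal (fun μ : ℂ ↦ T.eigenspace μ) :=
    (DirectSum.isInternal_submodule_iff_iSupIndep_and_iSup_eq_top _).mpr
      ⟨T.eigenspaces_iSupIndep, hT⟩
  let v : ∀ μ : ℂ, Module.Basis _ ℂ (T.eigenspace μ) := fun μ ↦ Module.Basis.ofVectorSpace ℂ _
  let b := hInt.collectedBasis v
  have hb : ∀ i, (b i : W) ∈ T.eigenspace i.1 := hInt.collectedBasis_mem v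
  have hTb : ∀ i, T (b i) = i.1 • b i := fun i ↦ Module.End.mem_eigenspace_iff.mp (hb i)
  haveI : Fintype (Σ μ : ℂ, (Module.Basis.ofVectorSpaceIndex ℂ (T.eigenspace μ))) :=
    FiniteDimensional.fintypeBasisIndex b
  have hcoordT : ∀ j, (b.coord j) ∘ₗ T = j.1 • b.coord j := by
    intro j
    apply b.ext
    intro k
    simp only [LinearMap.comp_apply, LinearMap.smul_apply, hTb k, map_smul,
      Module.Basis.coord_apply, Module.Basis.repr_self]
    by_cases h : k = j
    · subst h; simp
    · simp [Finsupp.single_apply, h, Ne.symm]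
  -- the rank-one maps
  set E : (Σ μ : ℂ, (Module.Basis.ofVectorSpaceIndex ℂ (T.eigenspace μ))) →
      (Σ μ : ℂ, (Module.Basis.ofVectorSpaceIndex ℂ (T.eigenspace μ))) → Module.End ℂ W :=
    fun i j ↦ (b.coord j).smulRight (b i) with hE
  have hEeig : ∀ i j, E i j ∈ (adC T).eigenspace (i.1 - j.1) := by
    intro i j
    rw [Module.End.mem_eigenspace_iff]
    ext w
    have h1 : b.coord j (T w) = j.1 • b.coord j w := by
      have := congrArg (fun f => f w) (hcoordT j); simpa using this
    simp only [adC, LinearMap.sub_apply, LinearMap.mulLeft_apply, LinearMap.mulRight_apply,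
      Module.End.mul_apply, hE, LinearMap.smulRight_apply, LinearMap.smul_apply, map_smul,
      hTb i, h1, smul_smul, smul_eq_mul]
    rw [← sub_smul]
    ring_nf
  have hdecomp : ∀ Y : Module.End ℂ W,
      Y = ∑ i, ∑ j, (b.repr (Y (b j)) i) • E i j := by
    intro Y
    apply b.ext
    intro k
    simp only [LinearMap.sum_apply, LinearMap.smul_apply, hE, LinearMap.smulRight_apply,
      Module.Basis.coord_apply, Module.Basis.repr_self]
    rw [Finset.sum_comm]
    rw [Finset.sum_eq_single k]
    · simp [Module.Basis.sum_repr]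
    · intro j _ hj
      simp [Finsupp.single_apply, Ne.symm hj]
    · intro h; exact absurd (Finset.mem_univ k) h
  intro Y _
  rw [hdecomp Y]
  apply Submodule.sum_mem
  intro i _
  apply Submodule.sum_mem
  intro j _
  apply Submodule.smul_mem
  have hi : T.HasEigenvalue i.1 :=
    Module.End.hasEigenvalue_of_hasEigenvector ⟨hb i, b.ne_zero i⟩
  have hj : T.HasEigenvalue j.1 :=
    Module.End.hasEigenvalue_of_hasEigenvector ⟨hb j, b.ne_zero j⟩
  refine Submodule.mem_iSup_of_mem i.1 ?_
  refine Submodule.mem_iSup_of_mem hi ?_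
  refine Submodule.mem_iSup_of_mem j.1 ?_
  refine Submodule.mem_iSup_of_mem hj ?_
  exact hEeig i j

end Key

theorem ad_of_elliptic_is_elliptic
    {V : Type*} [AddCommGroup V] [Module ℝ V] [FiniteDimensional ℝ V]
    (E : Module.End ℝ V) (hE : IsElliptic E) :
    IsDiag (adC (cplx E)) ∧
    ∀ μ : ℂ, (adC (cplx E)).HasEigenvalue μ → μ.re = 0 := by
  obtain ⟨hdiag, him⟩ := hE
  have key := adC_key (cplx E) hdiag
  constructor
  · show (⨆ μ : ℂ, (adC (cplx E)).eigenspace μ) = ⊤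
    rw [eq_top_iff]
    refine key.trans ?_
    refine iSup_le fun a ↦ iSup_le fun _ ↦ iSup_le fun c ↦ iSup_le fun _ ↦ ?_
    exact le_iSup (fun μ : ℂ ↦ (adC (cplx E)).eigenspace μ) (a - c)
  · intro ν hν
    by_contra hre
    have hle : (adC (cplx E)).eigenspace ν ≤
        ⨆ (μ : ℂ) (_ : μ ≠ ν), (adC (cplx E)).eigenspace μ := by
      refine le_trans le_top (key.trans ?_)
      refine iSup_le fun a ↦ iSup_le fun ha ↦ iSup_le fun c ↦ iSup_le fun hc ↦ ?_
      have hne : a - c ≠ ν := by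
        intro h
        apply hre
        rw [← h, Complex.sub_re, him a ha, him c hc, sub_zero]
      exact le_iSup₂ (f := fun (μ : ℂ) (_ : μ ≠ ν) ↦ (adC (cplx E)).eigenspace μ) (a - c) hne
    have hdisj := iSupIndep_def.mp (adC (cplx E)).eigenspaces_iSupIndep ν
    exact hν (hdisj.eq_bot_of_le hle)
end
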